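/- Let p be a positive integer, β > p, β₀ = β/p not an odd integer, and u₀ = (β₀ - {β₀}₂)/2. Define x₀ = (2u₀+1)β / (2u₀(2u₀+1) + β₀). Then x₀ lies in the edge fundamental interval I_{u₀} = (β/(2u₀+1), p) and pβ/x₀² > 2. -/

import Mathlib

/-- The signed fractional part `{t}₂`: the unique element of `(-1, 1]` with `t - {t}₂ ∈ 2ℤ`. -/
noncomputable def fract2 (t : ℝ) : ℝ := t - 2 * ⌈(t - 1) / 2⌉

set_option maxHeartbeats 1000000 in
theorem x0_mem_edge_interval (p : ℕ) (hp : 0 < p) (β : ℝ) (hβ : (p : ℝ) < β)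
    (hodd : ¬ ∃ k : ℤ, β / p = 2 * (k : ℝ) + 1)
    (u₀ : ℝ) (hu₀ : u₀ = (β / p - fract2 (β / p)) / 2)
    (x₀ : ℝ) (hx₀ : x₀ = (2 * u₀ + 1) * β / (2 * u₀ * (2 * u₀ + 1) + β / p)) :
    x₀ ∈ Set.Ioo (β / (2 * u₀ + 1)) (p : ℝ) ∧ 2 < (p : ℝ) * β / x₀ ^ 2 := by
  have hp' : (0:ℝ) < p := by exact_mod_cast hp
  set b := β / p with hb_def
  have hb : 1 < b := (one_lt_div hp').mpr hβ
  have hβb : β = p * b := by rw [hb_def]; field_simp [hp'.ne']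
  set n : ℤ := ⌈(b - 1) / 2⌉ with hn
  have hu : u₀ = (n : ℝ) := by rw [hu₀]; unfold fract2; ring
  have h1 : (b - 1) / 2 ≤ (n : ℝ) := Int.le_ceil _
  have hne : b ≠ 2 * (n : ℝ) + 1 := fun h => hodd ⟨n, by linarith⟩
  have hhi : b < 2 * (n : ℝ) + 1 := lt_of_le_of_ne (by linarith) hne
  have h2 : (n : ℝ) < (b - 1) / 2 + 1 := Int.ceil_lt_add_one _
  have hlo : 2 * (n : ℝ) - 1 < b := by linarith
  have hn1 : (0 : ℤ) < n := Int.ceil_pos.mpr (by linarith)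
  have hu1 : (1 : ℝ) ≤ (n : ℝ) := by exact_mod_cast hn1
  set u := (n : ℝ)
  have hD : (0 : ℝ) < 2 * u * (2 * u + 1) + b := by nlinarith
  have hx : x₀ = p * ((2 * u + 1) * b / (2 * u * (2 * u + 1) + b)) := by
    rw [hx₀, hβb, hu]; ring
  have h2u1 : (0:ℝ) < 2 * u + 1 := by linarith
  have hb0 : (0:ℝ) < b := by linarith
  have hxlt : x₀ < p := by
    rw [hx]
    nth_rewrite 2 [show (p:ℝ) = p * 1 by ring]
    apply mul_lt_mul_of_pos_left _ hp'
    rw [div_lt_one hD]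
    nlinarith
  have hxgt : β / (2 * u + 1) < x₀ := by
    rw [hx, hβb, div_lt_iff₀ h2u1,
      show (p:ℝ) * ((2 * u + 1) * b / (2 * u * (2 * u + 1) + b)) * (2 * u + 1)
        = (p:ℝ) * ((2 * u + 1) * ((2 * u + 1) * b)) / (2 * u * (2 * u + 1) + b) from by ring,
      lt_div_iff₀ hD]
    nlinarith [mul_pos hp' hb0]
  have hx0pos : 0 < x₀ := by
    rw [hx]
    positivity
  refine ⟨⟨by rw [hu]; exact hxgt, hxlt⟩, ?_⟩
  have h3' : (3:ℝ) ≤ (2 * u + 1) ^ 2 - 2 * (2 * u + 1) := by nlinarith [sq_nonneg (u - 1)]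
  have h3 : (0:ℝ) < (2 * u + 1) ^ 2 * ((2 * u + 1) ^ 2 - 2 * (2 * u + 1)) := by
    apply mul_pos (by positivity) (by linarith)
  have hkey : 2 * b * (2 * u + 1) ^ 2 < (2 * u * (2 * u + 1) + b) ^ 2 := by
    nlinarith [sq_nonneg (b - 2 * u - 1), h3]
  rw [lt_div_iff₀ (by positivity), hx, hβb,
    show 2 * ((p:ℝ) * ((2 * u + 1) * b / (2 * u * (2 * u + 1) + b))) ^ 2
      = 2 * ((p:ℝ) * ((2 * u + 1) * b)) ^ 2 / (2 * u * (2 * u + 1) + b) ^ 2 from by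
        field_simp,
    div_lt_iff₀ (by positivity)]
  nlinarith [mul_pos (mul_pos (mul_pos hp' hp') hb0) (sub_pos.mpr hkey)]
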